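/- Let G be a simple graph on a finite vertex set X with an entanglement-assisted zero-error protocol with m ≥ 1 messages, with state ψ ∈ ℂ^(Fin d × Fin d), projective measurements {P_x^i}, and POVMs {Q_j^{xx'}} (and {Q_j^x} for isolated vertices x). Let S be the d×d matrix with S_{l,k} = √d · ψ_{(k,l)} and set M = (Sᴴ · S)ᵀ. Then: (b) trace(P_x^i · P_{x'}^j · M) = 0 for every edge {x,x'} of G and all 1 ≤ i,j ≤ m; and (c) trace(P_x^i · P_x^j · M) = 0 for every vertex x ∈ X and all i ≠ j. -/

import Mathlib

open Matrix Kronecker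
open scoped BigOperators ComplexOrder

private lemma eq_zero_of_trace_conjTranspose_mul_self' {n : Type*} [Fintype n] [DecidableEq n]
    (A : Matrix n n ℂ) (h : (Aᴴ * A).trace = 0) : A = 0 := by
  have h2 : ((∑ j, ∑ i, Complex.normSq (A i j) : ℝ) : ℂ) = 0 := by
    rw [← h]
    push_cast
    simp only [Matrix.trace, Matrix.diag, Matrix.mul_apply, Matrix.conjTranspose_apply]
    refine Finset.sum_congr rfl fun j _ => Finset.sum_congr rfl fun i _ => ?_
    rw [Complex.normSq_eq_conj_mul_self]
    rfl
  have h3 : (∑ j, ∑ i, Complex.normSq (A i j) : ℝ) = 0 := by exact_mod_cast h2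
  ext i j
  have h4 := (Finset.sum_eq_zero_iff_of_nonneg (fun j _ => Finset.sum_nonneg
    (fun i _ => Complex.normSq_nonneg _))).mp h3 j (Finset.mem_univ j)
  have h5 := (Finset.sum_eq_zero_iff_of_nonneg (fun i _ => Complex.normSq_nonneg _)).mp
    h4 i (Finset.mem_univ i)
  simpa using Complex.normSq_eq_zero.mp h5

private lemma mul_eq_zero_of_trace_psd' {n : Type*} [Fintype n] [DecidableEq n]
    (T Q : Matrix n n ℂ) (hQ : Q.PosSemidef) (h : (Tᴴ * T * Q).trace = 0) : T * Q = 0 := by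
  obtain ⟨R, hRh, hRR⟩ : ∃ R : Matrix n n ℂ, Rᴴ = R ∧ R * R = Q := by
    open scoped MatrixOrder in
    exact ⟨CFC.sqrt Q, (CFC.sqrt_nonneg Q).posSemidef.1, CFC.sqrt_mul_sqrt_self Q hQ.nonneg⟩
  subst hRR
  have key : ((T * R)ᴴ * (T * R)).trace = 0 := by
    rw [conjTranspose_mul, hRh]
    calc (R * Tᴴ * (T * R)).trace
        = ((T * R) * (R * Tᴴ)).trace := by rw [trace_mul_comm]
      _ = ((T * (R * R)) * Tᴴ).trace := by
          congr 1
          noncomm_ring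
      _ = (Tᴴ * T * (R * R)).trace := by
          rw [trace_mul_comm, ← mul_assoc]
      _ = 0 := h
  have hTR : T * R = 0 := eq_zero_of_trace_conjTranspose_mul_self' _ key
  rw [← mul_assoc, hTR, zero_mul]

private lemma kron_inner' {d : ℕ} (ψ : Fin d × Fin d → ℂ) (A B : Matrix (Fin d) (Fin d) ℂ) :
    star ψ ⬝ᵥ ((A ⊗ₖ B) *ᵥ ψ) =
    ((Matrix.of fun k l => ψ (k, l))ᴴ * A * (Matrix.of fun k l => ψ (k, l)) * Bᵀ).trace := by
  have hL : star ψ ⬝ᵥ ((A ⊗ₖ B) *ᵥ ψ) =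
      ∑ k, ∑ l, ∑ k', ∑ l', star (ψ (k, l)) * A k k' * ψ (k', l') * B l l' := by
    simp only [Matrix.mulVec, dotProduct, kroneckerMap_apply, Fintype.sum_prod_type,
      Pi.star_apply, Finset.mul_sum]
    refine Finset.sum_congr rfl fun k _ => Finset.sum_congr rfl fun l _ =>
      Finset.sum_congr rfl fun k' _ => Finset.sum_congr rfl fun l' _ => by ring
  rw [hL]
  simp only [Matrix.trace, Matrix.diag, Matrix.mul_apply, Matrix.conjTranspose_apply,
    Matrix.of_apply, Matrix.transpose_apply, Finset.sum_mul]
  calc (∑ k, ∑ l, ∑ k', ∑ l', star (ψ (k, l)) * A k k' * ψ (k', l') * B l l')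
      = ∑ l, ∑ k, ∑ k', ∑ l', star (ψ (k, l)) * A k k' * ψ (k', l') * B l l' :=
        Finset.sum_comm
    _ = ∑ l, ∑ k, ∑ l', ∑ k', star (ψ (k, l)) * A k k' * ψ (k', l') * B l l' :=
        Finset.sum_congr rfl fun l _ => Finset.sum_congr rfl fun k _ => Finset.sum_comm
    _ = ∑ l, ∑ l', ∑ k, ∑ k', star (ψ (k, l)) * A k k' * ψ (k', l') * B l l' :=
        Finset.sum_congr rfl fun l _ => Finset.sum_comm
    _ = ∑ l, ∑ l', ∑ k', ∑ k, star (ψ (k, l)) * A k k' * ψ (k', l') * B l l' :=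
        Finset.sum_congr rfl fun l _ => Finset.sum_congr rfl fun l' _ => Finset.sum_comm

/-- Consequences of the zero-error condition for a single POVM family. -/
private lemma povm_facts' {d m : ℕ} (ψ : Fin d × Fin d → ℂ)
    (Pm : Matrix (Fin d) (Fin d) ℂ) (hherm : Pm.IsHermitian) (hidem : Pm * Pm = Pm)
    (Qf : Fin m → Matrix (Fin d) (Fin d) ℂ) (hpsd : ∀ j, (Qf j).PosSemidef)
    (hsum : ∑ j, Qf j = 1) (i : Fin m)
    (hz : ∀ j, star ψ ⬝ᵥ ((Pm ⊗ₖ Qf j) *ᵥ ψ) = if i = j then 1 else 0) :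
    (∀ j, i ≠ j → Pm * (Matrix.of fun k l => ψ (k, l)) * (Qf j)ᵀ = 0) ∧
    Pm * (Matrix.of fun k l => ψ (k, l)) * (Qf i)ᵀ = Pm * (Matrix.of fun k l => ψ (k, l)) := by
  set Ψ : Matrix (Fin d) (Fin d) ℂ := Matrix.of fun k l => ψ (k, l) with hΨ
  have hzeroj : ∀ j, i ≠ j → Pm * Ψ * (Qf j)ᵀ = 0 := by
    intro j hij
    refine mul_eq_zero_of_trace_psd' (Pm * Ψ) ((Qf j)ᵀ) (hpsd j).transpose ?_
    have hct : (Pm * Ψ)ᴴ = Ψᴴ * Pm := by rw [conjTranspose_mul, hherm.eq]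
    have : (Pm * Ψ)ᴴ * (Pm * Ψ) * (Qf j)ᵀ = Ψᴴ * Pm * Ψ * (Qf j)ᵀ := by
      rw [hct]
      congr 1
      calc Ψᴴ * Pm * (Pm * Ψ) = Ψᴴ * (Pm * Pm) * Ψ := by noncomm_ring
        _ = Ψᴴ * Pm * Ψ := by rw [hidem]
    rw [this, ← kron_inner', hz j, if_neg hij]
  refine ⟨hzeroj, ?_⟩
  have h1 : Pm * Ψ * (∑ j, Qf j)ᵀ = Pm * Ψ := by rw [hsum, transpose_one, mul_one]
  calc Pm * Ψ * (Qf i)ᵀ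
      = ∑ j, Pm * Ψ * (Qf j)ᵀ := by
        rw [Finset.sum_eq_single i (fun j _ hj => by
          rw [hzeroj j (Ne.symm hj)]) (fun h => absurd (Finset.mem_univ i) h)]
    _ = Pm * Ψ * (∑ j, Qf j)ᵀ := by rw [transpose_sum, Finset.mul_sum]
    _ = Pm * Ψ := h1

/-- The key trace-vanishing step. -/
private lemma trace_zero_step' {n : Type*} [Fintype n] [DecidableEq n]
    (Ψ A B Qt : Matrix n n ℂ) (hQ : Qtᴴ = Qt) (hA : Aᴴ = A)
    (h2 : A * Ψ * Qt = A * Ψ) (h1 : B * Ψ * Qt = 0) :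
    (Ψᴴ * A * B * Ψ).trace = 0 := by
  have e1 : Ψᴴ * A = Qt * (Ψᴴ * A) := by
    calc Ψᴴ * A = (A * Ψ)ᴴ := by rw [conjTranspose_mul, hA]
      _ = (A * Ψ * Qt)ᴴ := by rw [h2]
      _ = Qt * (Ψᴴ * A) := by rw [conjTranspose_mul, conjTranspose_mul, hQ, hA]
  have e2 : Ψᴴ * A * B * Ψ = Qt * ((Ψᴴ * A) * (B * Ψ)) := by
    conv_lhs => rw [e1]
    noncomm_ring
  rw [e2, trace_mul_comm]
  have e3 : (Ψᴴ * A) * (B * Ψ) * Qt = (Ψᴴ * A) * (B * Ψ * Qt) := by noncomm_ring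
  rw [e3, h1, mul_zero, trace_zero]

theorem orthogonality_relations_of_protocol
    {X : Type} [Fintype X] [DecidableEq X] (G : SimpleGraph X)
    (m d : ℕ) (hm : 1 ≤ m) (hd : 1 ≤ d)
    -- the shared bipartite state
    (ψ : Fin d × Fin d → ℂ) (hψ : star ψ ⬝ᵥ ψ = 1)
    -- Alice's projective measurements, one for each message `i`
    (P : Fin m → X → Matrix (Fin d) (Fin d) ℂ)
    (hPherm : ∀ i x, (P i x).IsHermitian)
    (hPidem : ∀ i x, P i x * P i x = P i x)
    (hPorth : ∀ i x x', x ≠ x' → P i x * P i x' = 0)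
    (hPsum : ∀ i, ∑ x, P i x = 1)
    -- Bob's POVMs, one for each edge `{x, x'}` of `G`
    (Q : X → X → Fin m → Matrix (Fin d) (Fin d) ℂ)
    (hQsymm : ∀ x x', G.Adj x x' → ∀ j, Q x x' j = Q x' x j)
    (hQpsd : ∀ x x', G.Adj x x' → ∀ j, (Q x x' j).PosSemidef)
    (hQsum : ∀ x x', G.Adj x x' → ∑ j, Q x x' j = 1)
    -- Bob's POVMs for isolated vertices
    (Q0 : X → Fin m → Matrix (Fin d) (Fin d) ℂ)
    (hQ0psd : ∀ x, (∀ y, ¬ G.Adj x y) → ∀ j, (Q0 x j).PosSemidef)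
    (hQ0sum : ∀ x, (∀ y, ¬ G.Adj x y) → ∑ j, Q0 x j = 1)
    -- zero-error (correct decoding) conditions
    (hzero : ∀ x x', G.Adj x x' → ∀ i j,
      star ψ ⬝ᵥ ((P i x ⊗ₖ Q x x' j) *ᵥ ψ) = if i = j then 1 else 0)
    (hzero0 : ∀ x, (∀ y, ¬ G.Adj x y) → ∀ i j,
      star ψ ⬝ᵥ ((P i x ⊗ₖ Q0 x j) *ᵥ ψ) = if i = j then 1 else 0) :
    ∀ (S : Matrix (Fin d) (Fin d) ℂ), S = Matrix.of (fun l k => (Real.sqrt d : ℂ) * ψ (k, l)) →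
    ∀ (M : Matrix (Fin d) (Fin d) ℂ), M = (Sᴴ * S)ᵀ →
      -- (b)
      ((∀ x x', G.Adj x x' → ∀ i j, (P i x * P j x' * M).trace = 0) ∧
      -- (c)
      (∀ x, ∀ i j, i ≠ j → (P i x * P j x * M).trace = 0)) := by
  intro S hS M hM
  set Ψ : Matrix (Fin d) (Fin d) ℂ := Matrix.of fun k l => ψ (k, l) with hΨ
  -- M = d • Ψ Ψᴴ
  have hM' : M = (d : ℂ) • (Ψ * Ψᴴ) := by
    subst hS hM
    ext k' k
    simp only [Matrix.transpose_apply, Matrix.mul_apply, Matrix.conjTranspose_apply,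
      Matrix.of_apply, Matrix.smul_apply, smul_eq_mul, Finset.mul_sum, hΨ, star_mul']
    refine Finset.sum_congr rfl fun l _ => ?_
    have hs : star ((Real.sqrt d : ℝ) : ℂ) = ((Real.sqrt d : ℝ) : ℂ) := by
      rw [Complex.star_def, Complex.conj_ofReal]
    have hdd : ((Real.sqrt d : ℝ) : ℂ) * ((Real.sqrt d : ℝ) : ℂ) = (d : ℂ) := by
      rw [← Complex.ofReal_mul, Real.mul_self_sqrt (Nat.cast_nonneg d)]
      norm_num
    rw [hs]
    linear_combination (star (ψ (k, l)) * ψ (k', l)) * hdd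
  -- reduce goal traces
  have key : ∀ (A B : Matrix (Fin d) (Fin d) ℂ),
      (Ψᴴ * A * B * Ψ).trace = 0 → (A * B * M).trace = 0 := by
    intro A B h
    rw [hM', mul_smul_comm, trace_smul]
    have e : A * B * (Ψ * Ψᴴ) = (A * B * Ψ) * Ψᴴ := by noncomm_ring
    have e2 : Ψᴴ * (A * B * Ψ) = Ψᴴ * A * B * Ψ := by noncomm_ring
    rw [e, trace_mul_comm, e2, h, smul_zero]
  constructor
  · -- (b)
    intro x x' hadj i j
    by_cases hij : i = j
    · subst hij
      rw [hPorth i x x' hadj.ne, zero_mul, trace_zero]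
    · -- facts at endpoint x with message i
      have factsx := povm_facts' ψ (P i x) (hPherm i x) (hPidem i x) (Q x x')
        (hQpsd x x' hadj) (hQsum x x' hadj) i (fun j' => hzero x x' hadj i j')
      -- facts at endpoint x' with message j
      have hz' : ∀ j', star ψ ⬝ᵥ ((P j x' ⊗ₖ Q x x' j') *ᵥ ψ) = if j = j' then 1 else 0 := by
        intro j'
        rw [hQsymm x x' hadj j']
        exact hzero x' x hadj.symm j j'
      have factsx' := povm_facts' ψ (P j x') (hPherm j x') (hPidem j x') (Q x x')
        (hQpsd x x' hadj) (hQsum x x' hadj) j hz'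
      refine key _ _ (trace_zero_step' Ψ (P i x) (P j x') ((Q x x' i)ᵀ)
        ((hQpsd x x' hadj i).transpose.1) (hPherm i x).eq factsx.2
        (factsx'.1 i (Ne.symm hij)))
  · -- (c)
    intro x i j hij
    by_cases hiso : ∀ y, ¬ G.Adj x y
    · have factsi := povm_facts' ψ (P i x) (hPherm i x) (hPidem i x) (Q0 x)
        (hQ0psd x hiso) (hQ0sum x hiso) i (fun j' => hzero0 x hiso i j')
      have factsj := povm_facts' ψ (P j x) (hPherm j x) (hPidem j x) (Q0 x)
        (hQ0psd x hiso) (hQ0sum x hiso) j (fun j' => hzero0 x hiso j j')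
      refine key _ _ (trace_zero_step' Ψ (P i x) (P j x) ((Q0 x i)ᵀ)
        ((hQ0psd x hiso i).transpose.1) (hPherm i x).eq factsi.2
        (factsj.1 i (Ne.symm hij)))
    · push_neg at hiso
      obtain ⟨y, hy⟩ := hiso
      have factsi := povm_facts' ψ (P i x) (hPherm i x) (hPidem i x) (Q x y)
        (hQpsd x y hy) (hQsum x y hy) i (fun j' => hzero x y hy i j')
      have factsj := povm_facts' ψ (P j x) (hPherm j x) (hPidem j x) (Q x y)
        (hQpsd x y hy) (hQsum x y hy) j (fun j' => hzero x y hy j j')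
      refine key _ _ (trace_zero_step' Ψ (P i x) (P j x) ((Q x y i)ᵀ)
        ((hQpsd x y hy i).transpose.1) (hPherm i x).eq factsi.2
        (factsj.1 i (Ne.symm hij)))
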